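/- With V_k = Σ_{i=1}^d ⟨k|ψ_i⟩ W_i A_i^{1/2} for k = 1, ..., m, one has Σ_{k=1}^m V_k* V_k = I_n, and the linear span of the matrices {V_k* V_l : k, l = 1, ..., m} equals the linear span of {A_i : i = 1, ..., d}. -/

import Mathlib

open Matrix ComplexOrder

/-- The square root of a positive semidefinite matrix, as defined in Mathlib (December 2024). -/
noncomputable def Matrix.PosSemidef.sqrt {n 𝕜 : Type*} [Fintype n] [DecidableEq n] [RCLike 𝕜]
    {A : Matrix n n 𝕜} (hA : A.PosSemidef) : Matrix n n 𝕜 :=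
  hA.1.eigenvectorUnitary.1 * diagonal ((↑) ∘ (√·) ∘ hA.1.eigenvalues) *
    (star hA.1.eigenvectorUnitary : Matrix n n 𝕜)

private lemma aux_sqrt_herm {n : ℕ} {A : Matrix (Fin n) (Fin n) ℂ} (hA : A.PosSemidef) :
    hA.sqrt.IsHermitian := by
  unfold Matrix.PosSemidef.sqrt
  simp [IsHermitian, conjTranspose_mul, star_eq_conjTranspose, diagonal_conjTranspose,
    Matrix.mul_assoc]
  congr 3
  funext i
  simp [Complex.conj_ofReal]

private lemma aux_sqrt_mul_self {n : ℕ} {A : Matrix (Fin n) (Fin n) ℂ} (hA : A.PosSemidef) :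
    hA.sqrt * hA.sqrt = A := by
  have hU : (star hA.1.eigenvectorUnitary : Matrix (Fin n) (Fin n) ℂ) *
      hA.1.eigenvectorUnitary.1 = 1 := Unitary.coe_star_mul_self _
  unfold Matrix.PosSemidef.sqrt
  conv_rhs => rw [hA.1.spectral_theorem, Unitary.conjStarAlgAut_apply]
  simp only [Matrix.mul_assoc]
  rw [← Matrix.mul_assoc (star _ : Matrix (Fin n) (Fin n) ℂ) _, hU, Matrix.one_mul,
    ← Matrix.mul_assoc (diagonal _) (diagonal _), diagonal_mul_diagonal]
  congr 3
  funext i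
  simp only [Function.comp_apply]
  have h := Real.mul_self_sqrt (hA.eigenvalues_nonneg i)
  exact_mod_cast congrArg (fun x : ℝ => (x : ℂ)) h

open ContinuousLinearMap in
private lemma aux_selfadj (n : ℕ) {A : Matrix (Fin n) (Fin n) ℂ} (hA : A.PosSemidef) :
    adjoint (Matrix.toEuclideanCLM (𝕜 := ℂ) hA.sqrt) =
      Matrix.toEuclideanCLM (𝕜 := ℂ) hA.sqrt := by
  rw [← star_eq_adjoint, ← map_star]
  congr 1
  exact aux_sqrt_herm hA

open ContinuousLinearMap in
private lemma aux_comp_self (n : ℕ) {A : Matrix (Fin n) (Fin n) ℂ} (hA : A.PosSemidef) :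
    (Matrix.toEuclideanCLM (𝕜 := ℂ) hA.sqrt).comp (Matrix.toEuclideanCLM (𝕜 := ℂ) hA.sqrt) =
      Matrix.toEuclideanCLM (𝕜 := ℂ) A := by
  have h := congrArg (Matrix.toEuclideanCLM (𝕜 := ℂ)) (aux_sqrt_mul_self hA)
  rw [_root_.map_mul] at h
  exact h

open ContinuousLinearMap in
private lemma aux_range (n : ℕ) {A : Matrix (Fin n) (Fin n) ℂ} (hA : A.PosSemidef) :
    LinearMap.range (Matrix.toEuclideanCLM (𝕜 := ℂ) hA.sqrt :
        EuclideanSpace ℂ (Fin n) →ₗ[ℂ] EuclideanSpace ℂ (Fin n)) =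
      LinearMap.range (Matrix.toEuclideanCLM (𝕜 := ℂ) A :
        EuclideanSpace ℂ (Fin n) →ₗ[ℂ] EuclideanSpace ℂ (Fin n)) := by
  set T := Matrix.toEuclideanCLM (𝕜 := ℂ) hA.sqrt with hT
  set TA := Matrix.toEuclideanCLM (𝕜 := ℂ) A with hTA
  have hcomp : T.comp T = TA := aux_comp_self n hA
  have hle : LinearMap.range (TA : EuclideanSpace ℂ (Fin n) →ₗ[ℂ] EuclideanSpace ℂ (Fin n)) ≤ LinearMap.range (T : EuclideanSpace ℂ (Fin n) →ₗ[ℂ] EuclideanSpace ℂ (Fin n)) := by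
    rintro x ⟨y, rfl⟩
    exact ⟨T y, by rw [← hcomp]; rfl⟩
  have hker : LinearMap.ker (TA : EuclideanSpace ℂ (Fin n) →ₗ[ℂ] EuclideanSpace ℂ (Fin n)) = LinearMap.ker (T : EuclideanSpace ℂ (Fin n) →ₗ[ℂ] EuclideanSpace ℂ (Fin n)) := by
    apply le_antisymm
    · intro x hx
      have hx' : TA x = 0 := hx
      have h1 : (inner ℂ (T x) (T x) : ℂ) = 0 := by
        rw [← ContinuousLinearMap.adjoint_inner_right, aux_selfadj n hA]
        have : T (T x) = 0 := by
          rw [← ContinuousLinearMap.comp_apply, hcomp, hx']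
        rw [this, inner_zero_right]
      have := inner_self_eq_zero.mp h1
      simpa [LinearMap.mem_ker] using this
    · intro x hx
      have hx' : T x = 0 := hx
      have : TA x = 0 := by rw [← hcomp, ContinuousLinearMap.comp_apply, hx', map_zero]
      simpa [LinearMap.mem_ker] using this
  have e1 : LinearMap.range (↑T : EuclideanSpace ℂ (Fin n) →ₗ[ℂ] EuclideanSpace ℂ (Fin n))
      = LinearMap.range (T : EuclideanSpace ℂ (Fin n) →ₗ[ℂ] EuclideanSpace ℂ (Fin n)) := by ext x; simp [LinearMap.mem_range]
  have e2 : LinearMap.range (↑TA : EuclideanSpace ℂ (Fin n) →ₗ[ℂ] EuclideanSpace ℂ (Fin n))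
      = LinearMap.range (TA : EuclideanSpace ℂ (Fin n) →ₗ[ℂ] EuclideanSpace ℂ (Fin n)) := by ext x; simp [LinearMap.mem_range]
  have e3 : LinearMap.ker (↑T : EuclideanSpace ℂ (Fin n) →ₗ[ℂ] EuclideanSpace ℂ (Fin n))
      = LinearMap.ker (T : EuclideanSpace ℂ (Fin n) →ₗ[ℂ] EuclideanSpace ℂ (Fin n)) := by ext x; simp [LinearMap.mem_ker]
  have e4 : LinearMap.ker (↑TA : EuclideanSpace ℂ (Fin n) →ₗ[ℂ] EuclideanSpace ℂ (Fin n))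
      = LinearMap.ker (TA : EuclideanSpace ℂ (Fin n) →ₗ[ℂ] EuclideanSpace ℂ (Fin n)) := by ext x; simp [LinearMap.mem_ker]
  have h1 := LinearMap.finrank_range_add_finrank_ker
    (T : EuclideanSpace ℂ (Fin n) →ₗ[ℂ] EuclideanSpace ℂ (Fin n))
  have h2 := LinearMap.finrank_range_add_finrank_ker
    (TA : EuclideanSpace ℂ (Fin n) →ₗ[ℂ] EuclideanSpace ℂ (Fin n))
  rw [e1, e3] at h1
  rw [e2, e4, hker] at h2
  exact (Submodule.eq_of_le_of_finrank_le hle (by omega)).symm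

set_option maxHeartbeats 1000000 in
set_option synthInstance.maxHeartbeats 1000000 in
/-- Kraus operators built from a positive basis of a noncommutative graph:
with `V k = ∑ i ⟨k|ψ_i⟩ W_i A_i^{1/2}` one has `∑ k V_k* V_k = I` and
`span {V_k* V_l} = span {A_i}`. -/
theorem kraus_operators_of_noncommutative_graph
    (n d m : ℕ) (hdm : d ≤ m ^ 2)
    (A : Fin d → Matrix (Fin n) (Fin n) ℂ)
    (hA : ∀ i, (A i).PosSemidef)
    (hAsum : ∑ i, A i = 1)
    (ψ : Fin d → EuclideanSpace ℂ (Fin m))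
    (hψ : ∀ i, ‖ψ i‖ = 1)
    (hψind : LinearIndependent ℂ fun i => vecMulVec (ψ i) (star (ψ i)))
    (HB : Type*) [NormedAddCommGroup HB] [InnerProductSpace ℂ HB] [CompleteSpace HB]
    (W : Fin d → EuclideanSpace ℂ (Fin n) →L[ℂ] HB)
    (hW : ∀ i, (ContinuousLinearMap.adjoint (W i)).comp (W i) =
      (LinearMap.range ((Matrix.toEuclideanCLM (𝕜 := ℂ) (A i) :
          EuclideanSpace ℂ (Fin n) →ₗ[ℂ] EuclideanSpace ℂ (Fin n)))).subtypeL.comp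
        (Submodule.orthogonalProjectionOnto (LinearMap.range ((Matrix.toEuclideanCLM (𝕜 := ℂ) (A i) :
          EuclideanSpace ℂ (Fin n) →ₗ[ℂ] EuclideanSpace ℂ (Fin n))))))
    (hWorth : ∀ i j, i ≠ j → (ContinuousLinearMap.adjoint (W i)).comp (W j) = 0)
    (V : Fin m → EuclideanSpace ℂ (Fin n) →L[ℂ] HB)
    (hV : ∀ k, V k = ∑ i, ψ i k •
      (W i).comp (Matrix.toEuclideanCLM (𝕜 := ℂ) ((hA i).sqrt))) :
    (∑ k, (ContinuousLinearMap.adjoint (V k)).comp (V k)) = ContinuousLinearMap.id ℂ _ ∧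
    Submodule.span ℂ
        {T : EuclideanSpace ℂ (Fin n) →L[ℂ] EuclideanSpace ℂ (Fin n) |
          ∃ k l, T = (ContinuousLinearMap.adjoint (V k)).comp (V l)} =
      Submodule.span ℂ (Set.range fun i => Matrix.toEuclideanCLM (𝕜 := ℂ) (A i)) := by
  classical
  open ContinuousLinearMap in
  -- the projections absorb the square roots
  have hPT : ∀ i : Fin d,
      ((LinearMap.range ((Matrix.toEuclideanCLM (𝕜 := ℂ) (A i) :
          EuclideanSpace ℂ (Fin n) →ₗ[ℂ] EuclideanSpace ℂ (Fin n)))).subtypeL.comp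
        (Submodule.orthogonalProjectionOnto (LinearMap.range ((Matrix.toEuclideanCLM (𝕜 := ℂ) (A i) :
          EuclideanSpace ℂ (Fin n) →ₗ[ℂ] EuclideanSpace ℂ (Fin n)))))).comp
        (Matrix.toEuclideanCLM (𝕜 := ℂ) ((hA i).sqrt)) =
        Matrix.toEuclideanCLM (𝕜 := ℂ) ((hA i).sqrt) := by
    intro i
    refine ContinuousLinearMap.ext fun x => ?_
    have hmem : Matrix.toEuclideanCLM (𝕜 := ℂ) ((hA i).sqrt) x ∈
        LinearMap.range ((Matrix.toEuclideanCLM (𝕜 := ℂ) (A i) :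
          EuclideanSpace ℂ (Fin n) →ₗ[ℂ] EuclideanSpace ℂ (Fin n))) :=
      (aux_range n (hA i)) ▸ LinearMap.mem_range_self _ x
    simp only [ContinuousLinearMap.comp_apply, Submodule.subtypeL_apply]
    exact Submodule.starProjection_eq_self_iff.mpr hmem
  have hadjV : ∀ k, adjoint (V k) = ∑ i, (starRingEnd ℂ) (ψ i k) •
      (Matrix.toEuclideanCLM (𝕜 := ℂ) ((hA i).sqrt)).comp (adjoint (W i)) := by
    intro k
    rw [hV k, map_sum]
    refine Finset.sum_congr rfl fun i _ => ?_
    rw [LinearIsometryEquiv.map_smulₛₗ, adjoint_comp, aux_selfadj]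
  have key : ∀ k l, (adjoint (V k)).comp (V l) =
      ∑ i, ((starRingEnd ℂ) (ψ i k) * ψ i l) • Matrix.toEuclideanCLM (𝕜 := ℂ) (A i) := by
    intro k l
    rw [hadjV k, hV l, ContinuousLinearMap.finset_sum_comp]
    refine Finset.sum_congr rfl fun i _ => ?_
    rw [ContinuousLinearMap.comp_finset_sum]
    rw [Finset.sum_eq_single i ?off ?notmem]
    case off =>
      intro j _ hji
      rw [ContinuousLinearMap.smul_comp, ContinuousLinearMap.comp_smul, smul_smul]
      have hz : ((Matrix.toEuclideanCLM (𝕜 := ℂ) ((hA i).sqrt)).comp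
          (adjoint (W i))).comp ((W j).comp (Matrix.toEuclideanCLM (𝕜 := ℂ) ((hA j).sqrt))) = 0 := by
        rw [ContinuousLinearMap.comp_assoc, ← ContinuousLinearMap.comp_assoc (adjoint (W i)),
          hWorth i j (Ne.symm hji), ContinuousLinearMap.zero_comp,
          ContinuousLinearMap.comp_zero]
      rw [hz, smul_zero]
    case notmem => intro h; exact absurd (Finset.mem_univ i) h
    rw [ContinuousLinearMap.smul_comp, ContinuousLinearMap.comp_smul, smul_smul]
    congr 1
    rw [ContinuousLinearMap.comp_assoc, ← ContinuousLinearMap.comp_assoc (adjoint (W i)),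
      hW i, hPT i, aux_comp_self n (hA i)]
  have hnorm1 : ∀ i, (∑ k, (starRingEnd ℂ) (ψ i k) * ψ i k) = 1 := by
    intro i
    have h1 : (inner ℂ (ψ i) (ψ i) : ℂ) = ∑ k, (starRingEnd ℂ) (ψ i k) * ψ i k := by
      rw [PiLp.inner_apply]
      simp [RCLike.inner_apply, Complex.conj_mul']
    have h2 : (inner ℂ (ψ i) (ψ i) : ℂ) = 1 := by
      rw [inner_self_eq_norm_sq_to_K, hψ i]
      norm_num
    rw [← h1, h2]
  constructor
  · have : (∑ k, (adjoint (V k)).comp (V k)) =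
        ∑ i, (∑ k, (starRingEnd ℂ) (ψ i k) * ψ i k) • Matrix.toEuclideanCLM (𝕜 := ℂ) (A i) := by
      simp_rw [key]
      rw [Finset.sum_comm]
      exact Finset.sum_congr rfl fun i _ => (Finset.sum_smul).symm
    rw [this]
    simp_rw [hnorm1, one_smul]
    rw [← map_sum, hAsum, _root_.map_one]
    rfl
  · apply le_antisymm
    · rw [Submodule.span_le]
      rintro T ⟨k, l, rfl⟩
      rw [key]
      exact Submodule.sum_mem _ fun i _ =>
        Submodule.smul_mem _ _ (Submodule.subset_span ⟨i, rfl⟩)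
    · rw [Submodule.span_le]
      rintro x ⟨j, rfl⟩
      -- use linear independence to find a dual functional
      set M : Fin d → Matrix (Fin m) (Fin m) ℂ := fun i => vecMulVec (ψ i) (star (ψ i)) with hM
      set Φ : (Fin d → ℂ) →ₗ[ℂ] Matrix (Fin m) (Fin m) ℂ := Fintype.linearCombination ℂ M with hΦ
      have hΦinj : Function.Injective Φ := by
        rw [← LinearMap.ker_eq_bot]
        rw [LinearMap.ker_eq_bot']
        intro g hg
        have hg' : ∑ i, g i • M i = 0 := by
          rwa [hΦ, Fintype.linearCombination_apply] at hg
        funext i0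
        exact (Fintype.linearIndependent_iff.mp hψind) g hg' i0
      obtain ⟨F, hF⟩ := LinearMap.dualMap_surjective_of_injective hΦinj
        (LinearMap.proj j : (Fin d → ℂ) →ₗ[ℂ] ℂ)
      have hFM : ∀ i, F (M i) = if i = j then 1 else 0 := by
        intro i
        have h1 : Φ (Pi.single i 1) = M i := by
          rw [hΦ, Fintype.linearCombination_apply]
          simp [Pi.single_apply]
        have h2 := DFunLike.congr_fun hF (Pi.single i 1)
        simp only [LinearMap.dualMap_apply, LinearMap.proj_apply] at h2
        rw [h1] at h2
        rw [h2, Pi.single_apply]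
        simp [eq_comm]
      have hcoef : ∀ i, (∑ k, ∑ l, F (Matrix.single l k 1) * ((starRingEnd ℂ) (ψ i k) * ψ i l))
          = F (M i) := by
        intro i
        conv_rhs => rw [matrix_eq_sum_single (M i)]
        rw [map_sum, Finset.sum_comm]
        refine Finset.sum_congr rfl fun k _ => ?_
        rw [map_sum]
        refine Finset.sum_congr rfl fun l _ => ?_
        have hMe : M i k l = ψ i k * (starRingEnd ℂ) (ψ i l) := by
          simp only [hM]
          rw [vecMulVec_apply]
          rfl
        have hstd : Matrix.single k l (M i k l) = (M i k l) • Matrix.single k l (1 : ℂ) := by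
          rw [smul_single, smul_eq_mul, mul_one]
        rw [hstd, _root_.map_smul, smul_eq_mul, hMe]
        ring
      have hrep : Matrix.toEuclideanCLM (𝕜 := ℂ) (A j) =
          ∑ k, ∑ l, F (Matrix.single l k 1) • ((adjoint (V k)).comp (V l)) := by
        have : (∑ k, ∑ l, F (Matrix.single l k 1) • ((adjoint (V k)).comp (V l))) =
            ∑ i, (∑ k, ∑ l, F (Matrix.single l k 1) * ((starRingEnd ℂ) (ψ i k) * ψ i l))
              • Matrix.toEuclideanCLM (𝕜 := ℂ) (A i) := by
          have e1 : ∀ k, (∑ l, F (Matrix.single l k 1) • ((adjoint (V k)).comp (V l))) =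
              ∑ i, ∑ l, (F (Matrix.single l k 1) * ((starRingEnd ℂ) (ψ i k) * ψ i l)) •
                Matrix.toEuclideanCLM (𝕜 := ℂ) (A i) := by
            intro k
            simp only [key, Finset.smul_sum, smul_smul]
            exact Finset.sum_comm
          calc (∑ k, ∑ l, F (Matrix.single l k 1) • ((adjoint (V k)).comp (V l)))
              = ∑ k, ∑ i, ∑ l, (F (Matrix.single l k 1) * ((starRingEnd ℂ) (ψ i k) * ψ i l)) •
                  Matrix.toEuclideanCLM (𝕜 := ℂ) (A i) := Finset.sum_congr rfl fun k _ => e1 k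
            _ = ∑ i, ∑ k, ∑ l, (F (Matrix.single l k 1) * ((starRingEnd ℂ) (ψ i k) * ψ i l)) •
                  Matrix.toEuclideanCLM (𝕜 := ℂ) (A i) := Finset.sum_comm
            _ = ∑ i, (∑ k, ∑ l, F (Matrix.single l k 1) * ((starRingEnd ℂ) (ψ i k) * ψ i l)) •
                  Matrix.toEuclideanCLM (𝕜 := ℂ) (A i) := by
                refine Finset.sum_congr rfl fun i _ => ?_
                exact (Finset.sum_smul.trans
                  (Finset.sum_congr rfl fun k _ => Finset.sum_smul)).symm
        rw [this]
        simp only [hcoef, hFM]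
        rw [Finset.sum_eq_single j (fun i _ hij => by rw [if_neg hij]; exact zero_smul ℂ (Matrix.toEuclideanCLM (𝕜 := ℂ) (A i)))
          (fun h => absurd (Finset.mem_univ j) h), if_pos rfl, one_smul]
      have hmem : Matrix.toEuclideanCLM (𝕜 := ℂ) (A j) ∈ Submodule.span ℂ
          {T : EuclideanSpace ℂ (Fin n) →L[ℂ] EuclideanSpace ℂ (Fin n) |
            ∃ k l, T = (adjoint (V k)).comp (V l)} := by
        rw [hrep]
        exact Submodule.sum_mem _ fun k _ => Submodule.sum_mem _ fun l _ =>
          Submodule.smul_mem _ _ (Submodule.subset_span ⟨k, l, rfl⟩)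
      exact hmem
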